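/- Let R be a ring and L a Lie ideal of R. Then [I([L,L]), R] ⊆ [L, R] ⊆ L, where I([L,L]) is the two-sided ideal of R generated by [L, L]. -/

import Mathlib

/-- The additive subgroup generated by commutators `a * b - b * a` with `a ∈ A`, `b ∈ B`. -/
def lieBr {R : Type*} [Ring R] (A B : Set R) : AddSubgroup R :=
  AddSubgroup.closure {z : R | ∃ a ∈ A, ∃ b ∈ B, z = a * b - b * a}

section Aux

variable {R : Type*} [Ring R] (L : AddSubgroup R)

lemma mem_lieBr_univ {x : R} (hx : x ∈ L) (t : R) :
    x * t - t * x ∈ lieBr (L : Set R) Set.univ :=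
  AddSubgroup.subset_closure ⟨x, hx, t, Set.mem_univ t, rfl⟩

/-- elements whose commutator with everything lies in `[L, R]`. -/
def commW : AddSubgroup R where
  carrier := {v | ∀ t : R, v * t - t * v ∈ lieBr (L : Set R) Set.univ}
  zero_mem' := by
    intro t
    simpa using (lieBr (L : Set R) Set.univ).zero_mem
  add_mem' := by
    intro a b ha hb t
    have h := add_mem (ha t) (hb t)
    have e : a * t - t * a + (b * t - t * b) = (a + b) * t - t * (a + b) := by noncomm_ring
    rwa [e] at h
  neg_mem' := by
    intro a ha t
    have h := neg_mem (ha t)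
    have e : -(a * t - t * a) = (-a) * t - t * (-a) := by noncomm_ring
    rwa [e] at h

lemma L_le_commW {x : R} (hx : x ∈ L) : x ∈ commW L := fun t => mem_lieBr_univ L hx t

lemma mul_mem_commW {x y : R} (hx : x ∈ L) (hy : y ∈ L) : x * y ∈ commW L := by
  intro t
  have h1 := mem_lieBr_univ L hx (y * t)
  have h2 := mem_lieBr_univ L hy (t * x)
  have h := add_mem h1 h2
  have e : x * (y * t) - y * t * x + (y * (t * x) - t * x * y)
      = x * y * t - t * (x * y) := by noncomm_ring
  rwa [e] at h

lemma key (hL : ∀ x ∈ L, ∀ r : R, x * r - r * x ∈ L) {x y : R} (hx : x ∈ L) (hy : y ∈ L)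
    (r s : R) : r * (x * y - y * x) * s ∈ commW L := by
  have h0 : x * (r * y * s) - (r * y * s) * x ∈ commW L := L_le_commW L (hL x hx _)
  have h1 : (x * (r * s) - (r * s) * x) * y ∈ commW L :=
    mul_mem_commW L (hL x hx _) hy
  have h2 : y * (r * (x * s - s * x)) - (r * (x * s - s * x)) * y ∈ commW L :=
    L_le_commW L (hL y hy _)
  have h3 : (y * r - r * y) * (x * s - s * x) ∈ commW L :=
    mul_mem_commW L (hL y hy r) (hL x hx s)
  have h4 : (x * r - r * x) * (y * s - s * y) ∈ commW L :=
    mul_mem_commW L (hL x hx r) (hL y hy s)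
  have e : r * (x * y - y * x) * s =
      (x * (r * y * s) - (r * y * s) * x)
      - (x * (r * s) - (r * s) * x) * y
      - (y * (r * (x * s - s * x)) - (r * (x * s - s * x)) * y)
      + (y * r - r * y) * (x * s - s * x)
      - (x * r - r * x) * (y * s - s * y) := by noncomm_ring
  rw [e]
  exact sub_mem (add_mem (sub_mem (sub_mem h0 h1) h2) h3) h4

/-- The two-sided ideal of elements all of whose two-sided multiples lie in `commW L`. -/
def idealK : TwoSidedIdeal R :=
  TwoSidedIdeal.mk' {u : R | ∀ r s : R, r * u * s ∈ commW L}
    (by intro r s; simpa using (commW L).zero_mem)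
    (by intro a b ha hb r s
        have h := add_mem (ha r s) (hb r s)
        have e : r * a * s + r * b * s = r * (a + b) * s := by noncomm_ring
        rwa [e] at h)
    (by intro a ha r s
        have h := neg_mem (ha r s)
        have e : -(r * a * s) = r * (-a) * s := by noncomm_ring
        rwa [e] at h)
    (by intro a b hb r s
        have h := hb (r * a) s
        have e : r * a * b * s = r * (a * b) * s := by noncomm_ring
        rwa [e] at h)
    (by intro a b ha r s
        have h := ha r (b * s)
        have e : r * a * (b * s) = r * (a * b) * s := by noncomm_ring
        rwa [e] at h)

lemma mem_idealK_iff (u : R) : u ∈ idealK L ↔ ∀ r s : R, r * u * s ∈ commW L := by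
  simp [idealK, TwoSidedIdeal.mem_mk']

end Aux

theorem stmt9 {R : Type*} [Ring R]
    (L : AddSubgroup R) (hL : ∀ x ∈ L, ∀ r : R, x * r - r * x ∈ L) :
    lieBr ((TwoSidedIdeal.span (lieBr (L : Set R) (L : Set R) : Set R) : TwoSidedIdeal R) : Set R)
        Set.univ ≤ lieBr (L : Set R) Set.univ ∧
    lieBr (L : Set R) Set.univ ≤ L := by
  constructor
  · -- First inclusion
    have hSK : (lieBr (L : Set R) (L : Set R) : Set R) ⊆ (idealK L : Set R) := by
      intro v hv
      rw [SetLike.mem_coe] at hv ⊢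
      induction hv using AddSubgroup.closure_induction with
      | mem z hz =>
        obtain ⟨a, ha, b, hb, rfl⟩ := hz
        rw [mem_idealK_iff]
        exact fun r s => key L hL ha hb r s
      | zero => exact zero_mem _
      | add a b _ _ ha hb => exact add_mem ha hb
      | neg a _ ha => exact neg_mem ha
    have hspan : (TwoSidedIdeal.span (lieBr (L : Set R) (L : Set R) : Set R)) ≤ idealK L := by
      intro u hu
      exact TwoSidedIdeal.mem_span_iff.mp hu _ hSK
    apply (AddSubgroup.closure_le _).2
    rintro z ⟨u, hu, t, -, rfl⟩
    have hK : u ∈ idealK L := hspan hu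
    have h := (mem_idealK_iff L u).mp hK 1 1
    have e : (1 : R) * u * 1 = u := by noncomm_ring
    rw [e] at h
    exact h t
  · apply (AddSubgroup.closure_le _).2
    rintro z ⟨a, ha, b, -, rfl⟩
    exact hL a ha b
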